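/- Let X = {X_s, s ≥ 0} be a real-valued stochastic process with independent increments whose increment characteristic functions satisfy E[e^{iu(X_t − X_s)}] = e^{−(t−s)ψ(u)} for all 0 ≤ s ≤ t and u ∈ ℝ, for some function ψ : ℝ → ℂ. Let θ ∈ ℝ be such that Re[ψ(θ)] > 0 and Re[ψ(2θ)] > 0. Then the characteristic functions of the increments of X satisfy hypotheses (H^θ1), (H^θ2) and (H^θ3), with the constant in (H^θ2) given by c(θ) = √(|ψ(θ)|² / (2 Re[ψ(θ)])). -/

import Mathlib

open MeasureTheory ProbabilityTheory Complex Filter Topology Set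

noncomputable section

/-- The characteristic function of the increment `X_y - X_x` evaluated at `θ`:
`φ_{X_y - X_x}(θ) = E[exp(i θ (X_y - X_x))]`. -/
def charIncr {Ω : Type*} [MeasurableSpace Ω] (P : Measure Ω) (X : ℝ → Ω → ℝ)
    (x y θ : ℝ) : ℂ :=
  ∫ ω, Complex.exp (Complex.I * θ * (X y ω - X x ω)) ∂P

/-- A real-valued process has independent increments. -/
def HasIndepIncrements {Ω : Type*} [MeasurableSpace Ω] (P : Measure Ω)
    (X : ℝ → Ω → ℝ) : Prop :=
  ∀ (n : ℕ) (τ : Fin (n + 1) → ℝ), Monotone τ → (∀ i, 0 ≤ τ i) →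
    iIndepFun (m := fun _ => Real.measurableSpace)
      (fun i : Fin n => fun ω => X (τ i.succ) ω - X (τ i.castSucc) ω) P

/-- Hypothesis (H^θ1). -/
def HypOne {Ω : Type*} [MeasurableSpace Ω] (P : Measure Ω) (X : ℝ → Ω → ℝ)
    (θ T : ℝ) : Prop :=
  ∃ K : ℝ, ∀ ε : ℝ, 0 < ε → ∀ s t : ℝ, 0 ≤ s → s < t → t ≤ T →
    ε ^ 2 * ∫ y in (2 * s / ε ^ 2)..(2 * t / ε ^ 2),
        ∫ x in (2 * s / ε ^ 2)..y, ‖charIncr P X x y θ‖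
      ≤ K * (t - s)

/-- Hypothesis (H^θ2), with constant `c`. -/
def HypTwo {Ω : Type*} [MeasurableSpace Ω] (P : Measure Ω) (X : ℝ → Ω → ℝ)
    (θ T c : ℝ) : Prop :=
  ∀ s t : ℝ, 0 ≤ s → s < t → t ≤ T →
    Tendsto (fun ε : ℝ =>
        (↑(ε ^ 2 * c ^ 2) : ℂ) * ∫ x in (2 * s / ε ^ 2)..(2 * t / ε ^ 2),
          ∫ y in (2 * s / ε ^ 2)..x,
            (charIncr P X y x θ + charIncr P X y x (-θ)))
      (𝓝[>] 0) (𝓝 ((2 * (t - s) : ℝ) : ℂ))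

/-- Hypothesis (H^θ3). -/
def HypThree {Ω : Type*} [MeasurableSpace Ω] (P : Measure Ω) (X : ℝ → Ω → ℝ)
    (θ T : ℝ) : Prop :=
  ∀ s t : ℝ, 0 ≤ s → s < t → t ≤ T →
    Tendsto (fun ε : ℝ =>
        ε ^ 2 * ∫ y in (2 * s / ε ^ 2)..(2 * t / ε ^ 2),
          ∫ x in (2 * s / ε ^ 2)..y,
            ‖charIncr P X x y θ‖ * ‖charIncr P X (2 * s / ε ^ 2) x (2 * θ)‖)
      (𝓝[>] 0) (𝓝 0)

/-- A standard real Brownian motion on `[0, T]`. -/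
def IsStdBMOn {Ω : Type*} [MeasurableSpace Ω] (P : Measure Ω)
    (B : ℝ → Ω → ℝ) (T : ℝ) : Prop :=
  (∀ t ∈ Set.Icc (0 : ℝ) T, Measurable (B t)) ∧
  (∀ᵐ ω ∂P, B 0 ω = 0) ∧
  (∀ᵐ ω ∂P, ContinuousOn (fun t => B t ω) (Set.Icc 0 T)) ∧
  (∀ s t : ℝ, 0 ≤ s → s ≤ t → t ≤ T →
    P.map (fun ω => B t ω - B s ω) = gaussianReal 0 (Real.toNNReal (t - s))) ∧
  (∀ (n : ℕ) (τ : Fin (n + 1) → ℝ), Monotone τ → (∀ i, τ i ∈ Set.Icc (0 : ℝ) T) →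
    iIndepFun (m := fun _ => Real.measurableSpace)
      (fun i : Fin n => fun ω => B (τ i.succ) ω - B (τ i.castSucc) ω) P)

/-- A complex Brownian motion on `[0, T]`: its real and imaginary parts are two
independent standard real Brownian motions. -/
def IsComplexBMOn {Ω : Type*} [MeasurableSpace Ω] (P : Measure Ω)
    (Z : ℝ → Ω → ℂ) (T : ℝ) : Prop :=
  IsStdBMOn P (fun t ω => (Z t ω).re) T ∧
  IsStdBMOn P (fun t ω => (Z t ω).im) T ∧
  IndepFun (fun ω => fun t : ℝ => (Z t ω).re) (fun ω => fun t : ℝ => (Z t ω).im) P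

/-- The (Kac–Stroock type) approximation process
`x_ε^θ(t) = ε c(θ) ∫_0^{2t/ε²} e^{iθ X_s} ds`. -/
def approxProc {Ω : Type*} [MeasurableSpace Ω] (X : ℝ → Ω → ℝ)
    (θ c ε t : ℝ) (ω : Ω) : ℂ :=
  (↑(ε * c) : ℂ) * ∫ s in (0 : ℝ)..(2 * t / ε ^ 2),
    Complex.exp (Complex.I * θ * X s ω)

instance (T : ℝ) : MeasurableSpace C(Set.Icc (0 : ℝ) T, ℂ) := borel _


namespace LevyAux

open intervalIntegral


lemma integral_exp_mul_real {r : ℝ} (hr : r ≠ 0) (a b : ℝ) :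
    ∫ x in a..b, Real.exp (r * x) = (Real.exp (r * b) - Real.exp (r * a)) / r := by
  rw [intervalIntegral.integral_comp_mul_left (fun x => Real.exp x) hr]
  simp [smul_eq_mul, div_eq_inv_mul]

/-- inner real integral -/
lemma inner_real {r : ℝ} (hr : r ≠ 0) (a y : ℝ) :
    ∫ x in a..y, Real.exp (-(y - x) * r) = (1 - Real.exp (-(y - a) * r)) / r := by
  have h : ∀ x : ℝ, Real.exp (-(y - x) * r) = Real.exp (r * x) * Real.exp (-(r * y)) := by
    intro x; rw [← Real.exp_add]; ring_nf
  simp_rw [h]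
  rw [intervalIntegral.integral_mul_const, integral_exp_mul_real hr]
  rw [div_mul_eq_mul_div, sub_mul, ← Real.exp_add, ← Real.exp_add]
  ring_nf
  rw [Real.exp_zero]; ring

/-- complex inner integral -/
lemma inner_complex {μ : ℂ} (hμ : μ ≠ 0) (a x : ℝ) :
    ∫ y in a..x, Complex.exp (-((x : ℂ) - (y : ℂ)) * μ) =
      (1 - Complex.exp (-((x : ℂ) - (a : ℂ)) * μ)) / μ := by
  have h : ∀ y : ℝ, Complex.exp (-((x : ℂ) - (y : ℂ)) * μ)
      = Complex.exp (μ * (y : ℂ)) * Complex.exp (-(μ * (x : ℂ))) := by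
    intro y; rw [← Complex.exp_add]; ring_nf
  simp_rw [h]
  rw [intervalIntegral.integral_mul_const, integral_exp_mul_complex hμ]
  rw [div_mul_eq_mul_div, sub_mul, ← Complex.exp_add, ← Complex.exp_add]
  ring_nf
  rw [Complex.exp_zero]; ring

/-- complex outer integral -/
lemma outer_complex {μ : ℂ} (hμ : μ ≠ 0) (a b : ℝ) :
    ∫ x in a..b, (1 - Complex.exp (-((x : ℂ) - (a : ℂ)) * μ)) / μ =
      (((b : ℂ) - (a : ℂ)) * μ - 1 + Complex.exp (-((b : ℂ) - (a : ℂ)) * μ)) / μ ^ 2 := by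
  rw [intervalIntegral.integral_div]
  have h : ∀ x : ℝ, (1 : ℂ) - Complex.exp (-((x : ℂ) - (a : ℂ)) * μ)
      = 1 - Complex.exp (-μ * (x : ℂ)) * Complex.exp (μ * (a : ℂ)) := by
    intro x; rw [← Complex.exp_add]; ring_nf
  simp_rw [h]
  rw [intervalIntegral.integral_sub (Continuous.intervalIntegrable (by continuity) _ _) (Continuous.intervalIntegrable (by continuity) _ _)]
  rw [intervalIntegral.integral_mul_const, integral_exp_mul_complex (neg_ne_zero.mpr hμ)]
  rw [intervalIntegral.integral_const]
  have e1 : Complex.exp (-μ * (b:ℂ)) * Complex.exp (μ * (a:ℂ)) = Complex.exp (-((b:ℂ)-(a:ℂ))*μ) := by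
    rw [← Complex.exp_add]; ring_nf
  have e2 : Complex.exp (-μ * (a:ℂ)) * Complex.exp (μ * (a:ℂ)) = 1 := by
    rw [← Complex.exp_add]; ring_nf; exact Complex.exp_zero
  rw [Complex.real_smul]
  push_cast
  have hsub : (cexp (-μ * ↑b) - cexp (-μ * ↑a)) / -μ * cexp (μ * ↑a)
      = (1 - cexp (-(↑b - ↑a) * μ)) / μ := by
    rw [div_mul_eq_mul_div, sub_mul, e1, e2, div_neg, ← neg_div, neg_sub]
  rw [hsub]
  field_simp
  ring

lemma exp_decay {c : ℝ} (hc : c ≠ 0) (a b : ℝ) :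
    ∫ y in a..b, Real.exp (-(y - a) * c) = (1 - Real.exp (-(b - a) * c)) / c := by
  have h : ∀ y : ℝ, Real.exp (-(y - a) * c) = Real.exp ((-c) * y) * Real.exp (c * a) := by
    intro y; rw [← Real.exp_add]; ring_nf
  simp_rw [h]
  rw [intervalIntegral.integral_mul_const, integral_exp_mul_real (neg_ne_zero.mpr hc)]
  rw [div_mul_eq_mul_div, sub_mul, ← Real.exp_add, ← Real.exp_add]
  rw [div_eq_div_iff (neg_ne_zero.mpr hc) hc]
  ring_nf
  rw [Real.exp_zero]
  ring

lemma double_mixed_le {r m : ℝ} (hr : 0 < r) (hm : 0 < m) {a b : ℝ} (hab : a ≤ b) :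
    ∫ y in a..b, ∫ x in a..y, Real.exp (-(y - x) * r) * Real.exp (-(x - a) * m)
      ≤ 4 / (min r m) ^ 2 := by
  set κ := min r m with hκdef
  have hκ : 0 < κ := lt_min hr hm
  have hpt : ∀ y ∈ Set.Icc a b,
      (∫ x in a..y, Real.exp (-(y - x) * r) * Real.exp (-(x - a) * m))
        ≤ 2 / κ * Real.exp (-(y - a) * (κ / 2)) := by
    intro y hy
    have hay : a ≤ y := hy.1
    have step1 : (∫ x in a..y, Real.exp (-(y - x) * r) * Real.exp (-(x - a) * m))
        ≤ ∫ _x in a..y, Real.exp (-(y - a) * κ) := by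
      apply intervalIntegral.integral_mono_on hay
        ((Continuous.intervalIntegrable (by continuity) _ _)) intervalIntegrable_const
      intro x hx
      rw [← Real.exp_add]
      apply Real.exp_le_exp.mpr
      have h1 : κ ≤ r := min_le_left _ _
      have h2 : κ ≤ m := min_le_right _ _
      nlinarith [hx.1, hx.2]
    have step2 : (∫ _x in a..y, Real.exp (-(y - a) * κ)) = (y - a) * Real.exp (-(y - a) * κ) := by
      simp [smul_eq_mul]
    have step3 : (y - a) * Real.exp (-(y - a) * κ) ≤ 2 / κ * Real.exp (-(y - a) * (κ / 2)) := by
      have h4 : Real.exp (-(y - a) * κ)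
          = Real.exp (-(y - a) * (κ / 2)) * Real.exp (-(y - a) * (κ / 2)) := by
        rw [← Real.exp_add]; ring_nf
      rw [h4, ← mul_assoc]
      apply mul_le_mul_of_nonneg_right _ (Real.exp_nonneg _)
      rw [show -(y - a) * (κ / 2) = -((y - a) * (κ / 2)) by ring, Real.exp_neg,
        inv_eq_one_div, mul_one_div, div_le_div_iff₀ (Real.exp_pos _) hκ]
      nlinarith [Real.add_one_le_exp ((y - a) * (κ / 2)), Real.exp_pos ((y - a) * (κ / 2)), hay, hκ]
    calc _ ≤ _ := step1
    _ = _ := step2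
    _ ≤ _ := step3
  have hrhs : (∫ y in a..b, 2 / κ * Real.exp (-(y - a) * (κ / 2))) ≤ 4 / κ ^ 2 := by
    rw [intervalIntegral.integral_const_mul, exp_decay (by positivity)]
    have h1 : (1 - Real.exp (-(b - a) * (κ / 2))) / (κ / 2) ≤ 1 / (κ / 2) := by
      gcongr
      linarith [Real.exp_nonneg (-(b - a) * (κ / 2))]
    calc 2 / κ * ((1 - Real.exp (-(b - a) * (κ / 2))) / (κ / 2))
        ≤ 2 / κ * (1 / (κ / 2)) := by
          exact mul_le_mul_of_nonneg_left h1 (by positivity)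
      _ = 4 / κ ^ 2 := by field_simp; ring
  refine le_trans ?_ hrhs
  by_cases hF : IntervalIntegrable
      (fun y => ∫ x in a..y, Real.exp (-(y - x) * r) * Real.exp (-(x - a) * m)) volume a b
  · exact intervalIntegral.integral_mono_on hab hF
      (Continuous.intervalIntegrable (by continuity) _ _) hpt
  · rw [intervalIntegral.integral_undef hF]
    apply intervalIntegral.integral_nonneg hab
    intro y _; positivity

lemma div_mono {x y c : ℝ} (h : x ≤ y) (hc : 0 < c) : x / c ≤ y / c := by
  gcongr

lemma alg {lam mu c D E1 E2 : ℂ} (hl : lam ≠ 0) (hm : mu ≠ 0)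
    (hc : c * (lam + mu) = lam * mu) :
    c * ((D * lam - 1 + E1) / lam ^ 2 + (D * mu - 1 + E2) / mu ^ 2)
      = D + c * ((E1 - 1) / lam ^ 2 + (E2 - 1) / mu ^ 2) := by
  field_simp
  linear_combination (D * lam * mu) * hc

end LevyAux

/-- a process with independent increments whose increment
characteristic functions are of Lévy exponential form satisfies (H^θ1), (H^θ2),
(H^θ3) when `Re[ψ(θ)] > 0` and `Re[ψ(2θ)] > 0`. -/
theorem levy_exponent_satisfies_hypotheses
    {Ω : Type*} [MeasurableSpace Ω] (P : Measure Ω) [IsProbabilityMeasure P]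
    (X : ℝ → Ω → ℝ) (hXmeas : ∀ s : ℝ, Measurable (X s))
    (hIndep : HasIndepIncrements P X)
    (ψ : ℝ → ℂ)
    (hchar : ∀ u : ℝ, ∀ s t : ℝ, 0 ≤ s → s ≤ t →
      charIncr P X s t u = Complex.exp (-(t - s) * ψ u))
    (T : ℝ) (hT : 0 < T) (θ : ℝ)
    (hθ : 0 < (ψ θ).re) (h2θ : 0 < (ψ (2 * θ)).re) :
    HypOne P X θ T ∧
    HypTwo P X θ T (Real.sqrt (‖ψ θ‖ ^ 2 / (2 * (ψ θ).re))) ∧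
    HypThree P X θ T := by
  have hr : (0:ℝ) < (ψ θ).re := hθ
  have hlam0 : ψ θ ≠ 0 := by
    intro h; rw [h] at hθ; simp at hθ
  have hmu0 : (starRingEnd ℂ) (ψ θ) ≠ 0 := by simpa using hlam0
  have hnorm : ∀ (u x y : ℝ), 0 ≤ x → x ≤ y →
      ‖charIncr P X x y u‖ = Real.exp (-(y - x) * (ψ u).re) := by
    intro u x y hx hxy
    rw [hchar u x y hx hxy, Complex.norm_exp]
    congr 1
    rw [show (-((y:ℂ) - (x:ℂ)) * ψ u) = ((-(y - x) : ℝ) : ℂ) * ψ u by push_cast; ring,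
      Complex.re_ofReal_mul]
  have hconj : ∀ (u x y : ℝ), charIncr P X x y (-u) = (starRingEnd ℂ) (charIncr P X x y u) := by
    intro u x y
    simp only [charIncr]
    rw [← integral_conj]
    congr 1; funext ω
    rw [← Complex.exp_conj]
    congr 1
    simp only [map_mul, map_sub, Complex.conj_I, Complex.conj_ofReal]
    push_cast; ring
  refine ⟨⟨2 / (ψ θ).re, ?_⟩, ?_, ?_⟩
  · -- HypOne
    intro ε hε s t hs hst htT
    have hε2 : (0:ℝ) < ε ^ 2 := by positivity
    set a := 2 * s / ε ^ 2 with hadef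
    set b := 2 * t / ε ^ 2 with hbdef
    have ha0 : 0 ≤ a := by positivity
    have hab : a ≤ b := by
      rw [hadef, hbdef]
      exact LevyAux.div_mono (by linarith) hε2
    have hba : ε ^ 2 * (b - a) = 2 * (t - s) := by
      rw [hadef, hbdef]; field_simp
    have hcongr : (∫ y in a..b, ∫ x in a..y, ‖charIncr P X x y θ‖)
        = ∫ y in a..b, (1 - Real.exp (-(y - a) * (ψ θ).re)) / (ψ θ).re := by
      apply intervalIntegral.integral_congr
      intro y hy
      rw [Set.uIcc_of_le hab] at hy
      try dsimp only
      rw [show (∫ x in a..y, ‖charIncr P X x y θ‖)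
          = ∫ x in a..y, Real.exp (-(y - x) * (ψ θ).re) from
        intervalIntegral.integral_congr fun x hx => by
          rw [Set.uIcc_of_le hy.1] at hx
          exact hnorm θ x y (le_trans ha0 hx.1) hx.2]
      exact LevyAux.inner_real (ne_of_gt hr) a y
    rw [hcongr]
    have hle : (∫ y in a..b, (1 - Real.exp (-(y - a) * (ψ θ).re)) / (ψ θ).re)
        ≤ (b - a) * (1 / (ψ θ).re) := by
      have hmono := intervalIntegral.integral_mono_on (μ := volume) hab
        (f := fun y => (1 - Real.exp (-(y - a) * (ψ θ).re)) / (ψ θ).re)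
        (g := fun _ => 1 / (ψ θ).re)
        (Continuous.intervalIntegrable (by fun_prop) a b)
        intervalIntegrable_const ?_
      · simpa using hmono
      · intro y _
        exact LevyAux.div_mono (by linarith [Real.exp_nonneg (-(y - a) * (ψ θ).re)]) hr
    have hfin : ε ^ 2 * ((b - a) * (1 / (ψ θ).re)) = 2 / (ψ θ).re * (t - s) := by
      rw [← mul_assoc, hba]; ring
    exact le_trans (mul_le_mul_of_nonneg_left hle hε2.le) (le_of_eq hfin)
  · -- HypTwo
    intro s t hs hst htT
    have hc2 : Real.sqrt (‖ψ θ‖ ^ 2 / (2 * (ψ θ).re)) ^ 2 = ‖ψ θ‖ ^ 2 / (2 * (ψ θ).re) :=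
      Real.sq_sqrt (by positivity)
    set c := Real.sqrt (‖ψ θ‖ ^ 2 / (2 * (ψ θ).re)) with hcdef
    have hkey : ((c ^ 2 : ℝ) : ℂ) * (ψ θ + (starRingEnd ℂ) (ψ θ))
        = ψ θ * (starRingEnd ℂ) (ψ θ) := by
      rw [Complex.add_conj, Complex.mul_conj, hc2,
        show Complex.normSq (ψ θ) = ‖ψ θ‖ ^ 2 by
          rw [Complex.normSq_eq_norm_sq],
        ← Complex.ofReal_mul]
      norm_cast
      field_simp
    have hnl : (0:ℝ) < ‖ψ θ‖ := norm_pos_iff.mpr hlam0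
    rw [tendsto_iff_norm_sub_tendsto_zero]
    refine squeeze_zero' (Eventually.of_forall fun ε => norm_nonneg _)
      (g := fun ε : ℝ => ε ^ 2 * (c ^ 2 * (4 / ‖ψ θ‖ ^ 2))) ?_ ?_
    · filter_upwards [self_mem_nhdsWithin] with ε hε
      replace hε : 0 < ε := hε
      have hε2 : (0:ℝ) < ε ^ 2 := by positivity
      set a := 2 * s / ε ^ 2 with hadef
      set b := 2 * t / ε ^ 2 with hbdef
      have ha0 : 0 ≤ a := by positivity
      have hab : a ≤ b := by
        rw [hadef, hbdef]; exact LevyAux.div_mono (by linarith) hε2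
      have hba : ε ^ 2 * (b - a) = 2 * (t - s) := by
        rw [hadef, hbdef]; field_simp
      have h1 : (∫ x in a..b, ∫ y in a..x, (charIncr P X y x θ + charIncr P X y x (-θ)))
          = ∫ x in a..b, ((1 - Complex.exp (-((x:ℂ) - (a:ℂ)) * ψ θ)) / ψ θ
              + (1 - Complex.exp (-((x:ℂ) - (a:ℂ)) * (starRingEnd ℂ) (ψ θ)))
                / (starRingEnd ℂ) (ψ θ)) := by
        apply intervalIntegral.integral_congr
        intro x hx
        rw [Set.uIcc_of_le hab] at hx
        try dsimp only
        rw [show (∫ y in a..x, (charIncr P X y x θ + charIncr P X y x (-θ)))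
            = ∫ y in a..x, (Complex.exp (-((x:ℂ) - (y:ℂ)) * ψ θ)
                + Complex.exp (-((x:ℂ) - (y:ℂ)) * (starRingEnd ℂ) (ψ θ))) from
          intervalIntegral.integral_congr fun y hy => by
            rw [Set.uIcc_of_le hx.1] at hy
            have h0y : 0 ≤ y := le_trans ha0 hy.1
            try dsimp only
            rw [hconj θ y x, hchar θ y x h0y hy.2, ← Complex.exp_conj]
            congr 2
            simp [map_mul, map_neg, map_sub, Complex.conj_ofReal]]
        rw [intervalIntegral.integral_add
          ((Continuous.cexp (by fun_prop)).intervalIntegrable _ _)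
          ((Continuous.cexp (by fun_prop)).intervalIntegrable _ _),
          LevyAux.inner_complex hlam0 a x, LevyAux.inner_complex hmu0 a x]
      have h2 : (∫ x in a..b, ((1 - Complex.exp (-((x:ℂ) - (a:ℂ)) * ψ θ)) / ψ θ
              + (1 - Complex.exp (-((x:ℂ) - (a:ℂ)) * (starRingEnd ℂ) (ψ θ)))
                / (starRingEnd ℂ) (ψ θ)))
          = (((b:ℂ) - (a:ℂ)) * ψ θ - 1 + Complex.exp (-((b:ℂ) - (a:ℂ)) * ψ θ)) / (ψ θ) ^ 2
            + (((b:ℂ) - (a:ℂ)) * (starRingEnd ℂ) (ψ θ) - 1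
                + Complex.exp (-((b:ℂ) - (a:ℂ)) * (starRingEnd ℂ) (ψ θ)))
              / ((starRingEnd ℂ) (ψ θ)) ^ 2 := by
        rw [intervalIntegral.integral_add
          (f := fun x : ℝ => (1 - Complex.exp (-((x:ℂ) - (a:ℂ)) * ψ θ)) / ψ θ)
          (g := fun x : ℝ => (1 - Complex.exp (-((x:ℂ) - (a:ℂ)) * (starRingEnd ℂ) (ψ θ)))
            / (starRingEnd ℂ) (ψ θ))
          (Continuous.intervalIntegrable (by fun_prop) _ _)
          (Continuous.intervalIntegrable (by fun_prop) _ _),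
          LevyAux.outer_complex hlam0, LevyAux.outer_complex hmu0]
      rw [h1, h2]
      have halg := LevyAux.alg (c := ((c ^ 2 : ℝ) : ℂ)) (D := ((b:ℂ) - (a:ℂ)))
        (E1 := Complex.exp (-((b:ℂ) - (a:ℂ)) * ψ θ))
        (E2 := Complex.exp (-((b:ℂ) - (a:ℂ)) * (starRingEnd ℂ) (ψ θ))) hlam0 hmu0 hkey
      have hD : ((ε ^ 2 : ℝ) : ℂ) * ((b:ℂ) - (a:ℂ)) = ((2 * (t - s) : ℝ) : ℂ) := by
        rw [show ((b:ℂ) - (a:ℂ)) = (((b - a) : ℝ) : ℂ) by push_cast; ring,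
          ← Complex.ofReal_mul, hba]
      have hEq : (↑(ε ^ 2 * c ^ 2) : ℂ)
            * ((((b:ℂ) - (a:ℂ)) * ψ θ - 1 + Complex.exp (-((b:ℂ) - (a:ℂ)) * ψ θ)) / (ψ θ) ^ 2
              + (((b:ℂ) - (a:ℂ)) * (starRingEnd ℂ) (ψ θ) - 1
                  + Complex.exp (-((b:ℂ) - (a:ℂ)) * (starRingEnd ℂ) (ψ θ)))
                / ((starRingEnd ℂ) (ψ θ)) ^ 2)
            - ((2 * (t - s) : ℝ) : ℂ)
          = ((ε ^ 2 : ℝ) : ℂ) * (((c ^ 2 : ℝ) : ℂ)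
              * ((Complex.exp (-((b:ℂ) - (a:ℂ)) * ψ θ) - 1) / (ψ θ) ^ 2
                + (Complex.exp (-((b:ℂ) - (a:ℂ)) * (starRingEnd ℂ) (ψ θ)) - 1)
                  / ((starRingEnd ℂ) (ψ θ)) ^ 2)) := by
        rw [show (↑(ε ^ 2 * c ^ 2) : ℂ) = ((ε ^ 2 : ℝ) : ℂ) * ((c ^ 2 : ℝ) : ℂ) by push_cast; ring,
          mul_assoc, halg, mul_add, hD]
        ring
      rw [hEq]
      have hE1 : ‖Complex.exp (-((b:ℂ) - (a:ℂ)) * ψ θ)‖ ≤ 1 := by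
        rw [Complex.norm_exp, Real.exp_le_one_iff,
          show (-((b:ℂ) - (a:ℂ)) * ψ θ) = ((-(b - a) : ℝ) : ℂ) * ψ θ by push_cast; ring,
          Complex.re_ofReal_mul]
        nlinarith
      have hE2 : ‖Complex.exp (-((b:ℂ) - (a:ℂ)) * (starRingEnd ℂ) (ψ θ))‖ ≤ 1 := by
        rw [Complex.norm_exp, Real.exp_le_one_iff,
          show (-((b:ℂ) - (a:ℂ)) * (starRingEnd ℂ) (ψ θ))
            = ((-(b - a) : ℝ) : ℂ) * (starRingEnd ℂ) (ψ θ) by push_cast; ring,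
          Complex.re_ofReal_mul, Complex.conj_re]
        nlinarith
      have hRem : ‖(Complex.exp (-((b:ℂ) - (a:ℂ)) * ψ θ) - 1) / (ψ θ) ^ 2
            + (Complex.exp (-((b:ℂ) - (a:ℂ)) * (starRingEnd ℂ) (ψ θ)) - 1)
              / ((starRingEnd ℂ) (ψ θ)) ^ 2‖ ≤ 4 / ‖ψ θ‖ ^ 2 := by
        refine le_trans (norm_add_le _ _) ?_
        rw [norm_div, norm_div, norm_pow, norm_pow, RCLike.norm_conj]
        have hb1 : ‖Complex.exp (-((b:ℂ) - (a:ℂ)) * ψ θ) - 1‖ ≤ 2 :=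
          le_trans (norm_sub_le _ _) (by rw [norm_one]; linarith)
        have hb2 : ‖Complex.exp (-((b:ℂ) - (a:ℂ)) * (starRingEnd ℂ) (ψ θ)) - 1‖ ≤ 2 :=
          le_trans (norm_sub_le _ _) (by rw [norm_one]; linarith)
        have hd1 : ‖Complex.exp (-((b:ℂ) - (a:ℂ)) * ψ θ) - 1‖ / ‖ψ θ‖ ^ 2
            ≤ 2 / ‖ψ θ‖ ^ 2 := LevyAux.div_mono hb1 (by positivity)
        have hd2 : ‖Complex.exp (-((b:ℂ) - (a:ℂ)) * (starRingEnd ℂ) (ψ θ)) - 1‖ / ‖ψ θ‖ ^ 2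
            ≤ 2 / ‖ψ θ‖ ^ 2 := LevyAux.div_mono hb2 (by positivity)
        calc _ ≤ 2 / ‖ψ θ‖ ^ 2 + 2 / ‖ψ θ‖ ^ 2 := add_le_add hd1 hd2
          _ = 4 / ‖ψ θ‖ ^ 2 := by ring
      calc ‖((ε ^ 2 : ℝ) : ℂ) * (((c ^ 2 : ℝ) : ℂ)
              * ((Complex.exp (-((b:ℂ) - (a:ℂ)) * ψ θ) - 1) / (ψ θ) ^ 2
                + (Complex.exp (-((b:ℂ) - (a:ℂ)) * (starRingEnd ℂ) (ψ θ)) - 1)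
                  / ((starRingEnd ℂ) (ψ θ)) ^ 2))‖
          = ε ^ 2 * (c ^ 2 * ‖(Complex.exp (-((b:ℂ) - (a:ℂ)) * ψ θ) - 1) / (ψ θ) ^ 2
                + (Complex.exp (-((b:ℂ) - (a:ℂ)) * (starRingEnd ℂ) (ψ θ)) - 1)
                  / ((starRingEnd ℂ) (ψ θ)) ^ 2‖) := by
            rw [norm_mul, norm_mul, Complex.norm_real, Complex.norm_real,
              Real.norm_eq_abs, Real.norm_eq_abs, _root_.abs_of_nonneg (sq_nonneg ε),
              _root_.abs_of_nonneg (sq_nonneg c)]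
        _ ≤ ε ^ 2 * (c ^ 2 * (4 / ‖ψ θ‖ ^ 2)) := by
            apply mul_le_mul_of_nonneg_left _ hε2.le
            exact mul_le_mul_of_nonneg_left hRem (by positivity)
    · have h0 : Tendsto (fun ε : ℝ => ε ^ 2 * (c ^ 2 * (4 / ‖ψ θ‖ ^ 2))) (𝓝 0) (𝓝 0) := by
        have := ((continuous_pow 2).mul (continuous_const
          (y := c ^ 2 * (4 / ‖ψ θ‖ ^ 2)))).tendsto (0 : ℝ)
        simpa [Pi.mul_def] using this
      exact h0.mono_left nhdsWithin_le_nhds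
  · -- HypThree
    intro s t hs hst htT
    set m := (ψ (2 * θ)).re with hmdef
    set κ := min (ψ θ).re m with hκdef
    have hκ : 0 < κ := lt_min hr h2θ
    refine squeeze_zero' (g := fun ε : ℝ => ε ^ 2 * (4 / κ ^ 2)) ?_ ?_ ?_
    · filter_upwards [self_mem_nhdsWithin] with ε hε
      replace hε : 0 < ε := hε
      have hab : 2 * s / ε ^ 2 ≤ 2 * t / ε ^ 2 :=
        LevyAux.div_mono (by linarith) (by positivity)
      apply mul_nonneg (sq_nonneg ε)
      apply intervalIntegral.integral_nonneg hab
      intro y hy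
      apply intervalIntegral.integral_nonneg hy.1
      intro x _
      positivity
    · filter_upwards [self_mem_nhdsWithin] with ε hε
      replace hε : 0 < ε := hε
      have hε2 : (0:ℝ) < ε ^ 2 := by positivity
      set a := 2 * s / ε ^ 2 with hadef
      set b := 2 * t / ε ^ 2 with hbdef
      have ha0 : 0 ≤ a := by positivity
      have hab : a ≤ b := by
        rw [hadef, hbdef]; exact LevyAux.div_mono (by linarith) hε2
      have hcongr : (∫ y in a..b, ∫ x in a..y,
            ‖charIncr P X x y θ‖ * ‖charIncr P X a x (2 * θ)‖)
          = ∫ y in a..b, ∫ x in a..y,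
              Real.exp (-(y - x) * (ψ θ).re) * Real.exp (-(x - a) * m) := by
        apply intervalIntegral.integral_congr
        intro y hy
        rw [Set.uIcc_of_le hab] at hy
        try dsimp only
        apply intervalIntegral.integral_congr
        intro x hx
        rw [Set.uIcc_of_le hy.1] at hx
        try dsimp only
        rw [hnorm θ x y (le_trans ha0 hx.1) hx.2,
          hnorm (2 * θ) a x ha0 hx.1]
      rw [hcongr]
      have hle := LevyAux.double_mixed_le hr h2θ hab
      exact mul_le_mul_of_nonneg_left hle hε2.le
    · have h0 : Tendsto (fun ε : ℝ => ε ^ 2 * (4 / κ ^ 2)) (𝓝 0) (𝓝 0) := by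
        have := ((continuous_pow 2).mul (continuous_const (y := 4 / κ ^ 2))).tendsto (0 : ℝ)
        simpa [Pi.mul_def] using this
      exact h0.mono_left nhdsWithin_le_nhds


end
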